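/- Let all items be identical, with m ≥ n, and let A be an allocation maximizing Π_{i ∈ N} |A_i|^{w_i} over all allocations. Then for any two agents i and j, ⌊w_i·(|A_i| + |A_j|)/(w_i + w_j)⌋ ≤ |A_i| ≤ ⌈w_i·(|A_i| + |A_j|)/(w_i + w_j)⌉. -/

import Mathlib

open Finset

/-- An allocation: a partition of the item set `Fin m` into `n` (possibly empty) bundles. -/
def IsAllocation {n m : ℕ} (A : Fin n → Finset (Fin m)) : Prop :=
  (∀ i j : Fin n, i ≠ j → Disjoint (A i) (A j)) ∧
    Finset.univ.biUnion A = (Finset.univ : Finset (Fin m))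

/-- Additive utility of agent `i` for a bundle `S`. -/
def util {n m : ℕ} (u : Fin n → Fin m → ℝ) (i : Fin n) (S : Finset (Fin m)) : ℝ :=
  ∑ g ∈ S, u i g

/-- Weighted envy-freeness up to (x, y)-fraction of one item. -/
def WEF {n m : ℕ} (w : Fin n → ℝ) (u : Fin n → Fin m → ℝ) (A : Fin n → Finset (Fin m))
    (x y : ℝ) : Prop :=
  ∀ i j : Fin n, ∃ B : Finset (Fin m), B ⊆ A j ∧ B.card ≤ 1 ∧
    (util u i (A i) + y * util u i B) / w i ≥ (util u i (A j) - x * util u i B) / w j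

/-- Weighted proportionality up to (x, y)-fraction of one item. -/
def WPROP {n m : ℕ} (w : Fin n → ℝ) (u : Fin n → Fin m → ℝ) (A : Fin n → Finset (Fin m))
    (x y : ℝ) : Prop :=
  ∀ i : Fin n, ∃ B : Finset (Fin m), B ⊆ Finset.univ \ A i ∧ B.card ≤ 1 ∧
    (util u i (A i) + y * util u i B) / w i ≥
      (util u i Finset.univ - (n : ℝ) * x * util u i B) / (∑ j, w j)

/-- The stronger notion WPROP*(x,y). -/
def WPROPstar {n m : ℕ} (w : Fin n → ℝ) (u : Fin n → Fin m → ℝ) (A : Fin n → Finset (Fin m))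
    (x y : ℝ) : Prop :=
  ∀ i : Fin n, ∃ B : Finset (Fin m), B ⊆ Finset.univ \ A i ∧ B.card ≤ 1 ∧
    ∃ Bf : Fin n → Finset (Fin m),
      (∀ j : Fin n, j ≠ i → Bf j ⊆ A j ∧ (Bf j).card ≤ 1) ∧
      (util u i (A i) + y * util u i B) / w i ≥
        (util u i Finset.univ - x * ∑ j ∈ Finset.univ.erase i, util u i (Bf j)) / (∑ j, w j)

/-- The (1-out-of-n) maximin share of agent `i`. -/
noncomputable def MMS {n m : ℕ} (u : Fin n → Fin m → ℝ) (i : Fin n) : ℝ :=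
  sSup {v : ℝ | ∃ Z : Fin n → Finset (Fin m), IsAllocation Z ∧ v = ⨅ j, util u i (Z j)}

/-- The normalized maximin share of agent `i`. -/
noncomputable def NMMS {n m : ℕ} (w : Fin n → ℝ) (u : Fin n → Fin m → ℝ) (i : Fin n) : ℝ :=
  (w i / ∑ j, w j) * (n : ℝ) * MMS u i

/-- The weighted maximin share of agent `i`. -/
noncomputable def WMMS {n m : ℕ} (w : Fin n → ℝ) (u : Fin n → Fin m → ℝ) (i : Fin n) : ℝ :=
  w i * sSup {v : ℝ | ∃ Z : Fin n → Finset (Fin m), IsAllocation Z ∧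
    v = ⨅ j, util u i (Z j) / w j}

lemma key_ineq (wi wj : ℝ) (hwi : 0 < wi) (hwj : 0 < wj) (a b : ℝ)
    (ha : 2 ≤ a) (hb : 1 ≤ b) (h : wi * (b + 1) ≤ wj * (a - 1)) :
    a ^ wi * b ^ wj < (a - 1) ^ wi * (b + 1) ^ wj := by
  have ha0 : (0:ℝ) < a := by linarith
  have ha1 : (0:ℝ) < a - 1 := by linarith
  have hb0 : (0:ℝ) < b := by linarith
  have hb1 : (0:ℝ) < b + 1 := by linarith
  rw [Real.rpow_def_of_pos ha0, Real.rpow_def_of_pos hb0, Real.rpow_def_of_pos ha1,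
    Real.rpow_def_of_pos hb1, ← Real.exp_add, ← Real.exp_add, Real.exp_lt_exp]
  have h1 : Real.log a - Real.log (a - 1) < 1 / (a - 1) := by
    have hne : a / (a - 1) ≠ 1 := by
      intro hc
      rw [div_eq_one_iff_eq (ne_of_gt ha1)] at hc
      linarith
    have h' := Real.log_lt_sub_one_of_pos (by positivity) hne
    rw [Real.log_div (ne_of_gt ha0) (ne_of_gt ha1)] at h'
    have he : a / (a - 1) - 1 = 1 / (a - 1) := by field_simp; ring
    linarith
  have h2 : 1 / (b + 1) < Real.log (b + 1) - Real.log b := by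
    have hne : b / (b + 1) ≠ 1 := by
      intro hc
      rw [div_eq_one_iff_eq (ne_of_gt hb1)] at hc
      linarith
    have h' := Real.log_lt_sub_one_of_pos (by positivity) hne
    rw [Real.log_div (ne_of_gt hb0) (ne_of_gt hb1)] at h'
    have he : b / (b + 1) - 1 = -(1 / (b + 1)) := by field_simp; ring
    linarith
  have h3 : wi / (a - 1) ≤ wj / (b + 1) := by
    rw [div_le_div_iff₀ ha1 hb1]
    linarith
  have h4 := mul_lt_mul_of_pos_left h1 hwi
  have h5 := mul_lt_mul_of_pos_left h2 hwj
  rw [mul_one_div] at h4 h5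
  nlinarith [h4, h5, h3]

lemma swap_alloc {n m : ℕ} (A : Fin n → Finset (Fin m)) (hA : IsAllocation A)
    (i j : Fin n) (hij : i ≠ j) (g : Fin m) (hg : g ∈ A i) :
    IsAllocation (fun k => if k = i then (A i).erase g else if k = j then insert g (A j) else A k) := by
  set A' : Fin n → Finset (Fin m) :=
    fun k => if k = i then (A i).erase g else if k = j then insert g (A j) else A k with hA'
  have hAi : A' i = (A i).erase g := by simp [hA']
  have hAj : A' j = insert g (A j) := by simp [hA', hij.symm]
  have hAk : ∀ k, k ≠ i → k ≠ j → A' k = A k := by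
    intro k h1 h2; simp [hA', h1, h2]
  have hgnot : ∀ k, k ≠ i → g ∉ A k := by
    intro k hk hgk
    exact (Finset.disjoint_left.mp (hA.1 k i hk)) hgk hg
  have hmem : ∀ (x : Fin m) (k : Fin n), x ∈ A' k ↔ (x = g ∧ k = j) ∨ (x ≠ g ∧ x ∈ A k) := by
    intro x k
    by_cases hki : k = i
    · subst hki
      rw [hAi, mem_erase]
      constructor
      · rintro ⟨hx, hxA⟩; exact Or.inr ⟨hx, hxA⟩
      · rintro (⟨hx, hk⟩ | ⟨hx, hxA⟩)
        · exact absurd hk hij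
        · exact ⟨hx, hxA⟩
    · by_cases hkj : k = j
      · subst hkj
        rw [hAj, mem_insert]
        constructor
        · rintro (hx | hxA)
          · exact Or.inl ⟨hx, rfl⟩
          · by_cases hx : x = g
            · exact Or.inl ⟨hx, rfl⟩
            · exact Or.inr ⟨hx, hxA⟩
        · rintro (⟨hx, _⟩ | ⟨_, hxA⟩)
          · exact Or.inl hx
          · exact Or.inr hxA
      · rw [hAk k hki hkj]
        constructor
        · intro hxA
          have hx : x ≠ g := by
            rintro rfl; exact hgnot k hki hxA
          exact Or.inr ⟨hx, hxA⟩
        · rintro (⟨_, hk⟩ | ⟨_, hxA⟩)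
          · exact absurd hk hkj
          · exact hxA
  constructor
  · intro k l hkl
    rw [Finset.disjoint_left]
    intro x hxk hxl
    rw [hmem] at hxk hxl
    rcases hxk with ⟨hx1, hk1⟩ | ⟨hx1, hk1⟩ <;> rcases hxl with ⟨hx2, hk2⟩ | ⟨hx2, hk2⟩
    · exact hkl (hk1.trans hk2.symm)
    · exact hx2 hx1
    · exact hx1 hx2
    · exact (Finset.disjoint_left.mp (hA.1 k l hkl)) hk1 hk2
  · apply Finset.eq_univ_iff_forall.mpr
    intro x
    rw [Finset.mem_biUnion]
    by_cases hx : x = g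
    · exact ⟨j, mem_univ j, (hmem x j).mpr (Or.inl ⟨hx, rfl⟩)⟩
    · have hxu : x ∈ Finset.univ.biUnion A := by rw [hA.2]; exact mem_univ x
      obtain ⟨k, _, hxk⟩ := Finset.mem_biUnion.mp hxu
      exact ⟨k, mem_univ k, (hmem x k).mpr (Or.inr ⟨hx, hxk⟩)⟩

/-- In an MWNW allocation with m ≥ n items, every bundle is nonempty. -/
lemma all_nonempty (n m : ℕ) (hn : 2 ≤ n) (hm : n ≤ m)
    (w : Fin n → ℝ) (hw : ∀ i, 0 < w i)
    (A : Fin n → Finset (Fin m)) (hA : IsAllocation A)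
    (hmax : ∀ A' : Fin n → Finset (Fin m), IsAllocation A' →
      ∏ i, ((A' i).card : ℝ) ^ (w i) ≤ ∏ i, ((A i).card : ℝ) ^ (w i)) :
    ∀ k, 1 ≤ (A k).card := by
  have hn0 : 0 < n := by omega
  set Z : Fin n → Finset (Fin m) :=
    fun i => Finset.univ.filter (fun g : Fin m => min g.val (n - 1) = i.val) with hZ
  have hZalloc : IsAllocation Z := by
    constructor
    · intro i j hij
      rw [Finset.disjoint_left]
      intro x hxi hxj
      simp only [hZ, mem_filter] at hxi hxj
      exact hij (Fin.ext (hxi.2 ▸ hxj.2))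
    · apply Finset.eq_univ_iff_forall.mpr
      intro g
      rw [Finset.mem_biUnion]
      refine ⟨⟨min g.val (n - 1), by omega⟩, mem_univ _, ?_⟩
      simp [hZ]
  have hZne : ∀ i : Fin n, 1 ≤ (Z i).card := by
    intro i
    rw [Nat.one_le_iff_ne_zero, ← Nat.pos_iff_ne_zero, Finset.card_pos]
    refine ⟨⟨i.val, lt_of_lt_of_le i.isLt hm⟩, ?_⟩
    simp only [hZ, mem_filter, mem_univ, true_and]
    exact inf_eq_left.mpr (by omega : i.val ≤ n - 1)
  have h1 : (1:ℝ) ≤ ∏ k, ((Z k).card : ℝ) ^ (w k) := by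
    have hp : ∏ k : Fin n, (1:ℝ) ≤ ∏ k, ((Z k).card : ℝ) ^ (w k) := by
      apply Finset.prod_le_prod
      · intro k _; norm_num
      · intro k _
        have hc : (1:ℝ) ≤ ((Z k).card : ℝ) := by exact_mod_cast hZne k
        calc (1:ℝ) = (1:ℝ) ^ (w k) := (Real.one_rpow _).symm
          _ ≤ ((Z k).card : ℝ) ^ (w k) := Real.rpow_le_rpow zero_le_one hc (le_of_lt (hw k))
    simpa using hp
  have h2 := le_trans h1 (hmax Z hZalloc)
  intro k
  by_contra hk
  have hk0 : (A k).card = 0 := by omega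
  have : ∏ i, ((A i).card : ℝ) ^ (w i) = 0 := by
    apply Finset.prod_eq_zero (mem_univ k)
    rw [hk0]
    simp [Real.zero_rpow (ne_of_gt (hw k))]
  linarith

/-- Pairwise product bound from swapping one item from i to j. -/
lemma swap_bound {n m : ℕ} (w : Fin n → ℝ) (hw : ∀ i, 0 < w i)
    (A : Fin n → Finset (Fin m)) (hA : IsAllocation A)
    (hcard : ∀ k, 1 ≤ (A k).card)
    (hmax : ∀ A' : Fin n → Finset (Fin m), IsAllocation A' →
      ∏ i, ((A' i).card : ℝ) ^ (w i) ≤ ∏ i, ((A i).card : ℝ) ^ (w i))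
    (i j : Fin n) (hij : i ≠ j) :
    (((A i).card : ℝ) - 1) ^ (w i) * (((A j).card : ℝ) + 1) ^ (w j)
      ≤ ((A i).card : ℝ) ^ (w i) * ((A j).card : ℝ) ^ (w j) := by
  obtain ⟨g, hg⟩ := Finset.card_pos.mp (hcard i)
  set A' : Fin n → Finset (Fin m) :=
    fun k => if k = i then (A i).erase g else if k = j then insert g (A j) else A k with hA'
  have hall := swap_alloc A hA i j hij g hg
  have hprod := hmax A' hall
  have hgj : g ∉ A j := fun hgj => (Finset.disjoint_left.mp (hA.1 i j hij)) hg hgj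
  have hci : ((A' i).card : ℝ) = ((A i).card : ℝ) - 1 := by
    have : A' i = (A i).erase g := by simp [hA']
    rw [this, Finset.card_erase_of_mem hg]
    have := hcard i
    push_cast [Nat.cast_sub (hcard i)]
    ring
  have hcj : ((A' j).card : ℝ) = ((A j).card : ℝ) + 1 := by
    have : A' j = insert g (A j) := by simp [hA', hij.symm]
    rw [this, Finset.card_insert_of_notMem hgj]
    push_cast
    ring
  have hck : ∀ k, k ≠ i → k ≠ j → A' k = A k := by
    intro k h1 h2; simp [hA', h1, h2]
  have hjmem : j ∈ Finset.univ.erase i := Finset.mem_erase.mpr ⟨hij.symm, mem_univ j⟩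
  have hsplit : ∀ f : Fin n → ℝ, ∏ k, f k = f i * (f j * ∏ k ∈ (Finset.univ.erase i).erase j, f k) := by
    intro f
    rw [← Finset.mul_prod_erase Finset.univ f (mem_univ i),
      ← Finset.mul_prod_erase (Finset.univ.erase i) f hjmem]
  rw [hsplit (fun k => ((A' k).card : ℝ) ^ (w k)), hsplit (fun k => ((A k).card : ℝ) ^ (w k))] at hprod
  have hrest : ∏ k ∈ (Finset.univ.erase i).erase j, ((A' k).card : ℝ) ^ (w k)
      = ∏ k ∈ (Finset.univ.erase i).erase j, ((A k).card : ℝ) ^ (w k) := by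
    apply Finset.prod_congr rfl
    intro k hk
    rw [hck k (Finset.mem_erase.mp (Finset.mem_erase.mp hk).2).1 (Finset.mem_erase.mp hk).1]
  have hrpos : 0 < ∏ k ∈ (Finset.univ.erase i).erase j, ((A k).card : ℝ) ^ (w k) := by
    apply Finset.prod_pos
    intro k _
    apply Real.rpow_pos_of_pos
    exact_mod_cast lt_of_lt_of_le zero_lt_one (by exact_mod_cast hcard k)
  rw [hrest, hci, hcj] at hprod
  have := le_of_mul_le_mul_right (by linarith [hprod] :
    ((((A i).card : ℝ) - 1) ^ (w i) * (((A j).card : ℝ) + 1) ^ (w j)) *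
      (∏ k ∈ (Finset.univ.erase i).erase j, ((A k).card : ℝ) ^ (w k))
    ≤ (((A i).card : ℝ) ^ (w i) * ((A j).card : ℝ) ^ (w j)) *
      (∏ k ∈ (Finset.univ.erase i).erase j, ((A k).card : ℝ) ^ (w k))) hrpos
  exact this

/-- With identical items and m ≥ n, in any allocation maximizing the weighted Nash
welfare Π_i |A_i|^{w_i}, for any two agents i, j we have
⌊w_i·(a_i+a_j)/(w_i+w_j)⌋ ≤ a_i ≤ ⌈w_i·(a_i+a_j)/(w_i+w_j)⌉. -/
theorem mwnw_pairwise_quota (n m : ℕ) (hn : 2 ≤ n) (hm : n ≤ m)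
    (w : Fin n → ℝ) (hw : ∀ i, 0 < w i)
    (A : Fin n → Finset (Fin m)) (hA : IsAllocation A)
    (hmax : ∀ A' : Fin n → Finset (Fin m), IsAllocation A' →
      ∏ i, ((A' i).card : ℝ) ^ (w i) ≤ ∏ i, ((A i).card : ℝ) ^ (w i))
    (i j : Fin n) :
    ⌊w i * (((A i).card : ℝ) + ((A j).card : ℝ)) / (w i + w j)⌋ ≤ ((A i).card : ℤ) ∧
      ((A i).card : ℤ) ≤ ⌈w i * (((A i).card : ℝ) + ((A j).card : ℝ)) / (w i + w j)⌉ := by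
  have hcard := all_nonempty n m hn hm w hw A hA hmax
  by_cases hij : i = j
  · subst hij
    have hwi := hw i
    have heq : w i * (((A i).card : ℝ) + ((A i).card : ℝ)) / (w i + w i) = ((A i).card : ℝ) := by
      field_simp
    rw [heq]
    rw [show ((A i).card : ℝ) = (((A i).card : ℤ) : ℝ) by push_cast; ring]
    rw [Int.floor_intCast, Int.ceil_intCast]
    exact ⟨le_refl _, le_refl _⟩
  · set a := (A i).card with ha
    set b := (A j).card with hb
    have hwi := hw i
    have hwj := hw j
    have hwij : 0 < w i + w j := by linarith
    have ha1 : 1 ≤ a := hcard i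
    have hb1 : 1 ≤ b := hcard j
    set t : ℝ := w i * ((a : ℝ) + (b : ℝ)) / (w i + w j) with ht
    constructor
    · -- floor t ≤ a
      by_contra hcon
      push_neg at hcon
      have h1 : ((a : ℤ) + 1 : ℝ) ≤ t := by
        have : (a : ℤ) + 1 ≤ ⌊t⌋ := by omega
        calc ((a : ℤ) + 1 : ℝ) ≤ (⌊t⌋ : ℝ) := by exact_mod_cast this
          _ ≤ t := Int.floor_le t
      have h1' : (a : ℝ) + 1 ≤ t := by push_cast at h1 ⊢; linarith
      -- derive w j * (a+1) ≤ w i * (b-1)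
      have h2 : w j * ((a:ℝ) + 1) ≤ w i * ((b:ℝ) - 1) := by
        rw [ht, le_div_iff₀ hwij] at h1'
        nlinarith [h1']
      have hb2 : (2:ℝ) ≤ (b:ℝ) := by
        have hlt : (1:ℝ) < (b:ℝ) := by
          nlinarith [h2, hwi, hwj, (by exact_mod_cast ha1 : (1:ℝ) ≤ (a:ℝ))]
        have : 1 < b := by exact_mod_cast hlt
        exact_mod_cast this
      have hkey := key_ineq (w j) (w i) hwj hwi (b:ℝ) (a:ℝ) hb2
        (by exact_mod_cast ha1) h2
      have hswap := swap_bound w hw A hA hcard hmax j i (fun h => hij h.symm)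
      linarith [hkey, hswap]
    · -- a ≤ ceil t
      by_contra hcon
      push_neg at hcon
      have h1 : t ≤ (a : ℝ) - 1 := by
        have : ⌈t⌉ ≤ (a : ℤ) - 1 := by omega
        calc t ≤ (⌈t⌉ : ℝ) := Int.le_ceil t
          _ ≤ ((a : ℤ) - 1 : ℝ) := by exact_mod_cast this
          _ = (a : ℝ) - 1 := by push_cast; ring
      have h2 : w i * ((b:ℝ) + 1) ≤ w j * ((a:ℝ) - 1) := by
        rw [ht] at h1
        rw [div_le_iff₀ hwij] at h1
        nlinarith [h1]
      have ha2 : (2:ℝ) ≤ (a:ℝ) := by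
        have hlt : (1:ℝ) < (a:ℝ) := by
          nlinarith [h2, hwi, hwj, (by exact_mod_cast hb1 : (1:ℝ) ≤ (b:ℝ))]
        have : 1 < a := by exact_mod_cast hlt
        exact_mod_cast this
      have hkey := key_ineq (w i) (w j) hwi hwj (a:ℝ) (b:ℝ) ha2
        (by exact_mod_cast hb1) h2
      have hswap := swap_bound w hw A hA hcard hmax i j hij
      linarith [hkey, hswap]
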